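/- arXiv:1802.07302 — 2 statements merged into one kernel-verified Lean document; each statement's English description precedes it below -/
import Mathlib

section
/- Let $V$ be a finite-dimensional vector space over a field of characteristic zero, and let $\Gamma$ be a torsion subgroup of $\mathrm{GL}(V)$ (every element has finite order). If $\Gamma$ is finitely generated, then $\Gamma$ is finite. -/
instance : IsJacobsonRing ℤ := by
  rw [isJacobsonRing_iff_prime_eq]
  intro P hP
  rcases eq_or_ne P ⊥ with rfl | hne
  · refine le_antisymm ?_ Ideal.le_jacobson
    intro n hn
    by_contra h0
    obtain ⟨p, hp, hpd⟩ : ∃ p : ℕ, p.Prime ∧ ¬ (p:ℤ) ∣ n := by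
      obtain ⟨p, hple, hp⟩ := Nat.exists_infinite_primes (n.natAbs + 2)
      refine ⟨p, hp, fun hd => ?_⟩
      have h1 : p ∣ n.natAbs := Int.natAbs_dvd_natAbs.2 (by simpa using hd)
      have h2 : n.natAbs ≠ 0 := by simpa using h0
      have := Nat.le_of_dvd (Nat.pos_of_ne_zero h2) h1
      omega
    have hmax : (Ideal.span ({(p:ℤ)} : Set ℤ)).IsMaximal :=
      PrincipalIdealRing.isMaximal_of_irreducible
        (Int.prime_iff_natAbs_prime.2 (by simpa using hp)).irreducible
    have hle : (⊥ : Ideal ℤ).jacobson ≤ Ideal.span {(p:ℤ)} := sInf_le ⟨bot_le, hmax⟩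
    exact hpd (Ideal.mem_span_singleton.1 (hle hn))
  · have : P.IsMaximal := IsPrime.to_maximal_ideal hne
    exact Ideal.jacobson_eq_self_of_isMaximal

-- ℚ not module-finite over ℤ
theorem not_moduleFinite_rat (F : Type*) [Field F] [CharZero F] : ¬ Module.Finite ℤ F := by
  intro h
  have hint : Algebra.IsIntegral ℤ F := Algebra.IsIntegral.of_finite ℤ F
  have h2 : IsIntegral ℤ ((2 : F)⁻¹) := hint.isIntegral _
  have hq : IsIntegral ℤ ((2 : ℚ)⁻¹) := by
    have : Function.Injective (Rat.castHom F) := (Rat.castHom F).injective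
    have key : ((Rat.castHom F).toIntAlgHom) ((2:ℚ)⁻¹) = (2:F)⁻¹ := by
      simp
    exact (isIntegral_algHom_iff ((Rat.castHom F).toIntAlgHom) this).1 (key ▸ h2)
  obtain ⟨z, hz⟩ := IsIntegrallyClosed.isIntegral_iff.1 hq
  have : (z : ℚ) = (2:ℚ)⁻¹ := hz
  have h2z : (2*z : ℚ) = 1 := by rw [this]; norm_num
  have : (2*z : ℤ) = 1 := by exact_mod_cast h2z
  omega


theorem residue_finite {A : Type*} [CommRing A] [IsJacobsonRing A] [Algebra.FiniteType ℤ A]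
    (𝔪 : Ideal A) [𝔪.IsMaximal] :
    ∃ p : ℕ, p.Prime ∧ CharP (A ⧸ 𝔪) p ∧ Finite (A ⧸ 𝔪) := by
  letI : Field (A ⧸ 𝔪) := Ideal.Quotient.field 𝔪
  have hft : Algebra.FiniteType ℤ (A ⧸ 𝔪) :=
    Algebra.FiniteType.of_surjective (Ideal.Quotient.mkₐ ℤ 𝔪)
      (Ideal.Quotient.mkₐ_surjective ℤ 𝔪)
  have hfin : Module.Finite ℤ (A ⧸ 𝔪) := finite_of_finite_type_of_isJacobsonRing ℤ (A ⧸ 𝔪)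
  set p := ringChar (A ⧸ 𝔪) with hp
  rcases CharP.char_is_prime_or_zero (A ⧸ 𝔪) p with hprime | hzero
  · refine ⟨p, hprime, ringChar.charP _, ?_⟩
    haveI : CharP (A ⧸ 𝔪) p := ringChar.charP _
    haveI : Fact p.Prime := ⟨hprime⟩
    letI : Algebra (ZMod p) (A ⧸ 𝔪) := ZMod.algebra _ _
    haveI : Module.Finite (ZMod p) (A ⧸ 𝔪) :=
      Module.Finite.of_restrictScalars_finite ℤ (ZMod p) (A ⧸ 𝔪)
    exact Module.finite_of_finite (ZMod p)
  · exfalso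
    haveI : CharP (A ⧸ 𝔪) 0 := hzero ▸ ringChar.charP _
    haveI : CharZero (A ⧸ 𝔪) := CharP.charP_to_charZero _
    exact not_moduleFinite_rat (A ⧸ 𝔪) hfin

section MatrixPart
open Matrix Finset

variable {n : ℕ}

theorem entries_mul_mem {R : Type*} [CommRing R] (I : Ideal R) {U W : Matrix (Fin n) (Fin n) R}
    (hU : ∀ i j, U i j ∈ I) (i j : Fin n) : (U * W) i j ∈ I := by
  rw [Matrix.mul_apply]
  exact Ideal.sum_mem _ fun c _ => I.mul_mem_right _ (hU i c)

theorem entries_mul_mem' {R : Type*} [CommRing R] {I J : Ideal R}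
    {U W : Matrix (Fin n) (Fin n) R}
    (hU : ∀ i j, U i j ∈ I) (hW : ∀ i j, W i j ∈ J) (i j : Fin n) : (U * W) i j ∈ I * J := by
  rw [Matrix.mul_apply]
  exact Ideal.sum_mem _ fun c _ => Ideal.mul_mem_mul (hU i c) (hW c j)

theorem sum_range_peel2 {β : Type*} [AddCommMonoid β] (f : ℕ → β) (r' : ℕ) :
    ∑ j ∈ range (r' + 3), f j = (∑ j ∈ range (r' + 1), f (j + 2)) + f 1 + f 0 := by
  rw [Finset.sum_range_succ' f (r' + 2), Finset.sum_range_succ' (fun j => f (j + 1)) (r' + 1)]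

theorem local_unipotent_aux {L : Type*} [CommRing L] [IsDomain L] [IsNoetherianRing L]
    [IsLocalRing L] {r : ℕ} (hr2 : 2 ≤ r) (hru : IsUnit (r : L))
    (X : Matrix (Fin n) (Fin n) L)
    (hXm : ∀ i j, X i j ∈ IsLocalRing.maximalIdeal L)
    (hpow : (X + 1) ^ r = 1) : X = 0 := by
  set m : Ideal L := IsLocalRing.maximalIdeal L with hm
  by_contra hX0
  have hKrull : (⨅ i : ℕ, m ^ i) = ⊥ :=
    Ideal.iInf_pow_eq_bot_of_isLocalRing m (Ideal.IsMaximal.ne_top inferInstance)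
  have hexN : ∃ N, ¬ (∀ i j, X i j ∈ m ^ N) := by
    obtain ⟨i, j, hij⟩ : ∃ i j, X i j ≠ 0 := by
      by_contra h
      push_neg at h
      exact hX0 (by ext i j; simp [h i j])
    have : X i j ∉ (⨅ i : ℕ, m ^ i) := by rw [hKrull]; simpa using hij
    obtain ⟨N, hN⟩ := by simpa [Ideal.mem_iInf] using this
    exact ⟨N, fun h => hN (h i j)⟩
  classical
  set N := Nat.find hexN with hN
  have hNspec : ¬ (∀ i j, X i j ∈ m ^ N) := Nat.find_spec hexN
  have h01 : ∀ i j, X i j ∈ m ^ 1 := by simpa using hXm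
  have hN2 : 2 ≤ N := by
    by_contra h
    push_neg at h
    interval_cases N
    · exact hNspec (fun i j => by simp [Ideal.one_eq_top])
    · exact hNspec h01
  set t := N - 1 with ht
  have ht1 : 1 ≤ t := by omega
  have hXt : ∀ i j, X i j ∈ m ^ t := not_not.1 (Nat.find_min hexN (by omega))
  -- binomial expansion
  obtain ⟨r', rfl⟩ : ∃ r', r = r' + 2 := ⟨r - 2, by omega⟩
  have hbin := (Commute.one_right X).add_pow (r' + 2)
  rw [hpow] at hbin
  rw [show r' + 2 + 1 = r' + 3 from rfl,
    sum_range_peel2 (fun j => X ^ j * 1 ^ (r' + 2 - j) * ((r' + 2).choose j :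
      Matrix (Fin n) (Fin n) L)) r'] at hbin
  simp only [pow_zero, one_pow, mul_one, one_mul, Nat.choose_zero_right, Nat.choose_one_right,
    Nat.cast_one, pow_one] at hbin
  -- hbin : 1 = S + X * ↑(r'+2) + 1
  set S : Matrix (Fin n) (Fin n) L :=
    ∑ j ∈ range (r' + 1), X ^ (j + 2) * ((r' + 2).choose (j + 2) : Matrix (Fin n) (Fin n) L)
    with hS
  have hkey : X * ((r' + 2 : ℕ) : Matrix (Fin n) (Fin n) L) = -S := by
    have := hbin
    rw [← sub_eq_zero] at this
    have h2 : S + X * ((r' + 2 : ℕ) : Matrix (Fin n) (Fin n) L) = 0 := by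
      rw [← sub_eq_zero] at hbin ⊢
      linear_combination (norm := abel_nf) -hbin
    exact eq_neg_of_add_eq_zero_right h2
  -- entries of S lie in m ^ (t + 1)
  have hSmem : ∀ i j, S i j ∈ m ^ (t + 1) := by
    intro i j
    rw [hS, Matrix.sum_apply]
    refine Ideal.sum_mem _ fun c _ => ?_
    have hrw : X ^ (c + 2) * ((r' + 2).choose (c + 2) : Matrix (Fin n) (Fin n) L)
        = X * (X * (X ^ c * ((r' + 2).choose (c + 2) : Matrix (Fin n) (Fin n) L))) := by
      rw [pow_succ', pow_succ']
      ring_nf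
      rw [mul_assoc, mul_assoc]
    rw [hrw]
    have inner : ∀ a b, (X * (X ^ c * ((r' + 2).choose (c + 2) :
        Matrix (Fin n) (Fin n) L))) a b ∈ m ^ t :=
      entries_mul_mem (m ^ t) hXt
    have : (X * (X * (X ^ c * ((r' + 2).choose (c + 2) : Matrix (Fin n) (Fin n) L)))) i j
        ∈ m ^ t * m ^ t := entries_mul_mem' hXt inner i j
    exact Ideal.pow_le_pow_right (show t + 1 ≤ t + t by omega) (by rwa [← pow_add] at this)
  -- conclude entries of X lie in m ^ (t+1) = m ^ N, contradiction
  obtain ⟨u, hu⟩ := hru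
  refine hNspec fun i j => ?_
  have hNt : N = t + 1 := by omega
  rw [hNt]
  have hxr : (X * ((r' + 2 : ℕ) : Matrix (Fin n) (Fin n) L)) i j
      = ((r' + 2 : ℕ) : L) * X i j := by
    have hc : ((r' + 2 : ℕ) : Matrix (Fin n) (Fin n) L) = ((r' + 2 : ℕ) : L) • 1 := by
      rw [Nat.cast_smul_eq_nsmul, Nat.smul_one_eq_cast]
    rw [hc, mul_smul_comm, mul_one, Matrix.smul_apply, smul_eq_mul]
  have hmem : ((r' + 2 : ℕ) : L) * X i j ∈ m ^ (t + 1) := by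
    rw [← hxr, hkey, Matrix.neg_apply]
    exact neg_mem (hSmem i j)
  have : X i j = ↑u⁻¹ * (((r' + 2 : ℕ) : L) * X i j) := by
    rw [← hu, ← mul_assoc, Units.inv_mul, one_mul]
  rw [this]
  exact Ideal.mul_mem_left _ _ hmem

theorem congruence_torsion_free {A : Type*} [CommRing A] [IsDomain A] [IsNoetherianRing A]
    (𝔪 : Ideal A) [𝔪.IsMaximal] {r : ℕ} (hr2 : 2 ≤ r)
    (hrm : (r : A) ∉ 𝔪) (M : Matrix (Fin n) (Fin n) A) (hM : M ^ r = 1)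
    (hcong : ∀ i j, M i j - (1 : Matrix (Fin n) (Fin n) A) i j ∈ 𝔪) : M = 1 := by
  set L := Localization.AtPrime 𝔪
  letI : IsNoetherianRing L := IsLocalization.isNoetherianRing 𝔪.primeCompl _ ‹_›
  have hinj : Function.Injective (algebraMap A L) :=
    IsLocalization.injective _ 𝔪.primeCompl_le_nonZeroDivisors
  set φ : A →+* L := algebraMap A L with hφ
  set X : Matrix (Fin n) (Fin n) L := φ.mapMatrix M - 1 with hX
  have hXe : ∀ i j, X i j = φ (M i j - (1 : Matrix (Fin n) (Fin n) A) i j) := by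
    intro i j
    simp [hX, Matrix.one_apply, apply_ite φ, map_sub]
  have hXm : ∀ i j, X i j ∈ IsLocalRing.maximalIdeal L := fun i j => by
    rw [hXe i j]
    exact (IsLocalization.AtPrime.to_map_mem_maximal_iff L 𝔪 _).2 (hcong i j)
  have hru : IsUnit (r : L) := by
    have h2 := (IsLocalization.AtPrime.isUnit_to_map_iff L 𝔪 ((r : ℕ) : A)).2 hrm
    rwa [map_natCast] at h2
  have hpow : (X + 1) ^ r = 1 := by
    rw [hX, sub_add_cancel, ← map_pow, hM]
    simp
  have hX0 := local_unipotent_aux hr2 hru X hXm hpow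
  ext i j
  have h0 : φ (M i j - (1 : Matrix (Fin n) (Fin n) A) i j) = 0 := by
    rw [← hXe i j, hX0, Matrix.zero_apply]
  have := hinj (h0.trans (map_zero φ).symm)
  exact sub_eq_zero.1 this

open Matrix Finset


theorem exists_two_maximals (A : Type*) [CommRing A] [IsDomain A] [CharZero A]
    [IsJacobsonRing A] [Algebra.FiniteType ℤ A] :
    ∃ (𝔪₁ 𝔪₂ : Ideal A) (p₁ p₂ : ℕ), 𝔪₁.IsMaximal ∧ 𝔪₂.IsMaximal ∧ p₁.Prime ∧ p₂.Prime ∧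
      p₁ ≠ p₂ ∧ CharP (A ⧸ 𝔪₁) p₁ ∧ CharP (A ⧸ 𝔪₂) p₂ ∧ Finite (A ⧸ 𝔪₁) ∧ Finite (A ⧸ 𝔪₂) := by
  obtain ⟨𝔪₁, h𝔪₁⟩ := Ideal.exists_maximal A
  haveI := h𝔪₁
  obtain ⟨p₁, hp₁, hchar₁, hfin₁⟩ := residue_finite 𝔪₁
  -- p₁ is nonzero in A, hence not in the Jacobson radical ⊥
  have hjac : ((⊥ : Ideal A)).jacobson = ⊥ := IsJacobsonRing.out ‹IsJacobsonRing A› Ideal.isRadical_bot_of_noZeroDivisors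
  have hp₁ne : ((p₁ : ℕ) : A) ≠ 0 := Nat.cast_ne_zero.2 hp₁.ne_zero
  have : ((p₁ : ℕ) : A) ∉ ((⊥ : Ideal A)).jacobson := by
    rw [hjac]; simpa using hp₁ne
  rw [Ideal.jacobson, Ideal.mem_sInf] at this
  push_neg at this
  obtain ⟨𝔪₂, ⟨-, h𝔪₂⟩, hp₁notin⟩ := this
  haveI := h𝔪₂
  obtain ⟨p₂, hp₂, hchar₂, hfin₂⟩ := residue_finite 𝔪₂
  refine ⟨𝔪₁, 𝔪₂, p₁, p₂, h𝔪₁, h𝔪₂, hp₁, hp₂, ?_, hchar₁, hchar₂, hfin₁, hfin₂⟩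
  rintro rfl
  apply hp₁notin
  have : ((p₁ : ℕ) : A ⧸ 𝔪₂) = 0 := by
    haveI := hchar₂
    exact CharP.cast_eq_zero _ _
  rwa [← map_natCast (Ideal.Quotient.mk 𝔪₂), Ideal.Quotient.eq_zero_iff_mem] at this

theorem torsion_subgroup_matrix_finite {A : Type*} [CommRing A] [IsDomain A] [CharZero A]
    [IsJacobsonRing A] [Algebra.FiniteType ℤ A] [IsNoetherianRing A] {n : ℕ}
    (Δ : Subgroup (Matrix (Fin n) (Fin n) A)ˣ) (htor : ∀ g ∈ Δ, IsOfFinOrder g) : Finite Δ := by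
  obtain ⟨𝔪₁, 𝔪₂, p₁, p₂, h𝔪₁, h𝔪₂, hp₁, hp₂, hne, hchar₁, hchar₂, hfin₁, hfin₂⟩ :=
    exists_two_maximals A
  haveI := h𝔪₁; haveI := h𝔪₂; haveI := hfin₁; haveI := hfin₂
  set Φ₁ : (Matrix (Fin n) (Fin n) A)ˣ →* (Matrix (Fin n) (Fin n) (A ⧸ 𝔪₁))ˣ :=
    Units.map (RingHom.toMonoidHom (RingHom.mapMatrix (Ideal.Quotient.mk 𝔪₁))) with hΦ₁
  set Φ₂ : (Matrix (Fin n) (Fin n) A)ˣ →* (Matrix (Fin n) (Fin n) (A ⧸ 𝔪₂))ˣ :=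
    Units.map (RingHom.toMonoidHom (RingHom.mapMatrix (Ideal.Quotient.mk 𝔪₂))) with hΦ₂
  set Φ := Φ₁.prod Φ₂ with hΦ
  -- the kernel of Φ restricted to Δ is trivial
  have key : ∀ g ∈ Δ, Φ g = 1 → g = 1 := by
    intro g hg hΦg
    by_contra hg1
    have hford := htor g hg
    set m := orderOf g with hm
    have hm0 : 0 < m := hford.orderOf_pos
    have hm1 : m ≠ 1 := fun h => hg1 (orderOf_eq_one_iff.1 h)
    obtain ⟨r, hr, hrdvd⟩ := Nat.exists_prime_and_dvd hm1
    set h := g ^ (m / r) with hh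
    have hhr : h ^ r = 1 := by
      rw [hh, ← pow_mul, Nat.div_mul_cancel hrdvd, hm, pow_orderOf_eq_one]
    have hh1 : h ≠ 1 := by
      intro hcon
      have hdvd : m ∣ m / r := orderOf_dvd_of_pow_eq_one (hh ▸ hcon)
      have hlt : m / r < m := Nat.div_lt_self hm0 hr.one_lt
      have hpos : 0 < m / r := Nat.div_pos (Nat.le_of_dvd hm0 hrdvd) hr.pos
      have hle := Nat.le_of_dvd hpos hdvd
      omega
    have hΦh : Φ h = 1 := by rw [hh, map_pow, hΦg, one_pow]
    -- generic single-ideal argument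
    have main : ∀ (𝔪 : Ideal A), 𝔪.IsMaximal → ∀ p : ℕ, p.Prime → CharP (A ⧸ 𝔪) p → r ≠ p →
        (Units.map (RingHom.toMonoidHom (RingHom.mapMatrix (Ideal.Quotient.mk 𝔪)))) h = 1 →
        h = 1 := by
      intro 𝔪 hmax p hp hcharp hrp hmap
      haveI := hmax
      haveI := hcharp
      have hrm : ((r : ℕ) : A) ∉ 𝔪 := by
        intro hmem
        have : ((r : ℕ) : A ⧸ 𝔪) = 0 := by
          rw [← map_natCast (Ideal.Quotient.mk 𝔪)]
          exact Ideal.Quotient.eq_zero_iff_mem.2 hmem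
        have hdvd := (CharP.cast_eq_zero_iff (A ⧸ 𝔪) p r).1 this
        exact hrp ((Nat.prime_dvd_prime_iff_eq hp hr).1 hdvd).symm
      have hval : (h : Matrix (Fin n) (Fin n) A) ^ r = 1 := by
        rw [← Units.val_pow_eq_pow_val, hhr, Units.val_one]
      have hmapval : ((Ideal.Quotient.mk 𝔪).mapMatrix) (h : Matrix (Fin n) (Fin n) A)
          = (1 : Matrix (Fin n) (Fin n) (A ⧸ 𝔪)) := by
        have := congrArg Units.val hmap
        simpa using this
      have hcong : ∀ i j, (h : Matrix (Fin n) (Fin n) A) i j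
          - (1 : Matrix (Fin n) (Fin n) A) i j ∈ 𝔪 := by
        intro i j
        rw [← Ideal.Quotient.eq_zero_iff_mem, map_sub, sub_eq_zero]
        have h1 : (Ideal.Quotient.mk 𝔪) ((h : Matrix (Fin n) (Fin n) A) i j)
            = ((Ideal.Quotient.mk 𝔪).mapMatrix (h : Matrix (Fin n) (Fin n) A)) i j := rfl
        have h2 : (Ideal.Quotient.mk 𝔪) ((1 : Matrix (Fin n) (Fin n) A) i j)
            = ((Ideal.Quotient.mk 𝔪).mapMatrix (1 : Matrix (Fin n) (Fin n) A)) i j := rfl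
        rw [h1, h2, hmapval, _root_.map_one]
      exact Units.ext (congruence_torsion_free 𝔪 hr.two_le hrm _ hval hcong)
    have hpair : Φ₁ h = 1 ∧ Φ₂ h = 1 := by
      have := hΦh
      rw [hΦ] at this
      exact ⟨congrArg Prod.fst this, congrArg Prod.snd this⟩
    rcases eq_or_ne r p₁ with rfl | hne1
    · exact hh1 (main 𝔪₂ h𝔪₂ p₂ hp₂ hchar₂ hne hpair.2)
    · exact hh1 (main 𝔪₁ h𝔪₁ p₁ hp₁ hchar₁ hne1 hpair.1)
  -- conclude: Δ embeds in a finite group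
  refine Finite.of_injective (fun d : Δ => Φ (d : (Matrix (Fin n) (Fin n) A)ˣ)) ?_
  intro a b hab
  have h1 : Φ ((a : (Matrix (Fin n) (Fin n) A)ˣ) * (b : (Matrix (Fin n) (Fin n) A)ˣ)⁻¹) = 1 := by
    rw [_root_.map_mul, _root_.map_inv, show Φ (a : (Matrix (Fin n) (Fin n) A)ˣ) = Φ (b : (Matrix (Fin n) (Fin n) A)ˣ) from hab, mul_inv_cancel]
  have := key _ (Δ.mul_mem a.2 (Δ.inv_mem b.2)) h1
  exact Subtype.ext (mul_inv_eq_one.1 this)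

end MatrixPart

/-- Burnside: a finitely generated torsion subgroup of `GL(V)`, `V` a finite-dimensional
vector space over a field of characteristic zero, is finite. -/

theorem stmt_3 {k V : Type*} [Field k] [CharZero k] [AddCommGroup V] [Module k V]
    [FiniteDimensional k V]
    (Γ : Subgroup (LinearMap.GeneralLinearGroup k V))
    (htor : ∀ g ∈ Γ, IsOfFinOrder g)
    (hfg : Group.FG Γ) :
    Finite Γ := by
  classical
  set n := Module.finrank k V
  let b := Module.finBasis k V
  let e : LinearMap.GeneralLinearGroup k V ≃* (Matrix (Fin n) (Fin n) k)ˣ :=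
    Units.mapEquiv (LinearMap.toMatrixAlgEquiv b).toRingEquiv.toMulEquiv
  set Γ₂ : Subgroup (Matrix (Fin n) (Fin n) k)ˣ := Γ.map e.toMonoidHom with hΓ₂
  have htor₂ : ∀ g ∈ Γ₂, IsOfFinOrder g := by
    rintro g ⟨x, hx, rfl⟩
    exact e.toMonoidHom.isOfFinOrder (htor x hx)
  obtain ⟨S, hSfin, hSgen⟩ : ∃ S : Set ((Matrix (Fin n) (Fin n) k)ˣ),
      S.Finite ∧ Subgroup.closure S = Γ₂ := by
    obtain ⟨S₀, hS₀gen⟩ := hfg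
    refine ⟨(e.toMonoidHom ∘ Γ.subtype) '' S₀, (S₀.finite_toSet.image _), ?_⟩
    rw [Set.image_comp, ← MonoidHom.map_closure, ← MonoidHom.map_closure, hS₀gen,
      ← MonoidHom.range_eq_map, Subgroup.range_subtype]
  -- entries
  set s : Set k := ⋃ g ∈ S,
      (Set.range (fun p : Fin n × Fin n => (g : Matrix (Fin n) (Fin n) k) p.1 p.2) ∪
       Set.range (fun p : Fin n × Fin n =>
         ((g⁻¹ : (Matrix (Fin n) (Fin n) k)ˣ) : Matrix (Fin n) (Fin n) k) p.1 p.2)) with hs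
  have hsfin : s.Finite :=
    hSfin.biUnion (fun g _ => (Set.finite_range _).union (Set.finite_range _))
  set A : Subalgebra ℤ k := Algebra.adjoin ℤ s with hA
  have hAfg : A.FG := Subalgebra.fg_def.2 ⟨s, hsfin, rfl⟩
  haveI : Algebra.FiniteType ℤ ↥A := ⟨(Subalgebra.fg_top A).2 hAfg⟩
  haveI : IsNoetherianRing ↥A := isNoetherianRing_of_fg hAfg
  haveI : IsJacobsonRing ↥A := isJacobsonRing_of_finiteType (A := ℤ)
  haveI : IsDomain ↥A := inferInstance
  haveI : CharZero ↥A := inferInstance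
  -- the inclusion of matrix units
  have hφinj : Function.Injective (algebraMap ↥A k) := Subtype.val_injective
  set ρ : Matrix (Fin n) (Fin n) ↥A →+* Matrix (Fin n) (Fin n) k :=
    RingHom.mapMatrix (algebraMap ↥A k) with hρ
  have hρinj : Function.Injective ρ := Matrix.map_injective hφinj
  set ι : (Matrix (Fin n) (Fin n) ↥A)ˣ →* (Matrix (Fin n) (Fin n) k)ˣ :=
    Units.map ρ.toMonoidHom with hι
  have hιinj : Function.Injective ι := Units.map_injective hρinj
  have hrange : Γ₂ ≤ ι.range := by
    rw [← hSgen, Subgroup.closure_le]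
    intro g hgS
    have hmem : ∀ i j, ((g : Matrix (Fin n) (Fin n) k) i j) ∈ A := fun i j =>
      Algebra.subset_adjoin (Set.mem_biUnion hgS (Or.inl ⟨(i, j), rfl⟩))
    have hmeminv : ∀ i j,
        (((g⁻¹ : (Matrix (Fin n) (Fin n) k)ˣ) : Matrix (Fin n) (Fin n) k) i j) ∈ A := fun i j =>
      Algebra.subset_adjoin (Set.mem_biUnion hgS (Or.inr ⟨(i, j), rfl⟩))
    set M : Matrix (Fin n) (Fin n) ↥A := fun i j => ⟨(g : Matrix (Fin n) (Fin n) k) i j, hmem i j⟩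
    set N : Matrix (Fin n) (Fin n) ↥A := fun i j =>
      ⟨((g⁻¹ : (Matrix (Fin n) (Fin n) k)ˣ) : Matrix (Fin n) (Fin n) k) i j, hmeminv i j⟩
    have hρM : ρ M = (g : Matrix (Fin n) (Fin n) k) := by ext i j; rfl
    have hρN : ρ N = ((g⁻¹ : (Matrix (Fin n) (Fin n) k)ˣ) : Matrix (Fin n) (Fin n) k) := by
      ext i j; rfl
    have hMN : M * N = 1 := by
      apply hρinj
      rw [map_mul, hρM, hρN, map_one, ← Units.val_mul, mul_inv_cancel, Units.val_one]
    have hNM : N * M = 1 := by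
      apply hρinj
      rw [map_mul, hρM, hρN, map_one, ← Units.val_mul, inv_mul_cancel, Units.val_one]
    refine ⟨⟨M, N, hMN, hNM⟩, ?_⟩
    exact Units.ext hρM
  set Δ : Subgroup (Matrix (Fin n) (Fin n) ↥A)ˣ := Γ₂.comap ι with hΔ
  have htorΔ : ∀ d ∈ Δ, IsOfFinOrder d := by
    intro d hd
    obtain ⟨m, hm, hpow⟩ := isOfFinOrder_iff_pow_eq_one.1 (htor₂ (ι d) hd)
    exact isOfFinOrder_iff_pow_eq_one.2 ⟨m, hm, hιinj (by rw [map_pow, hpow, map_one])⟩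
  haveI : Finite Δ := torsion_subgroup_matrix_finite Δ htorΔ
  have hmapΔ : Δ.map ι = Γ₂ := by
    rw [hΔ, Subgroup.map_comap_eq, inf_eq_right.2 hrange]
  have hfin₂ : Finite Γ₂ := by
    rw [← hmapΔ]
    have hfins : ((Δ : Set ((Matrix (Fin n) (Fin n) ↥A)ˣ))).Finite := Set.toFinite _
    have himg : ((Δ.map ι : Subgroup ((Matrix (Fin n) (Fin n) k)ˣ)) :
        Set ((Matrix (Fin n) (Fin n) k)ˣ)).Finite := by
      rw [Subgroup.coe_map]
      exact hfins.image _
    exact himg.to_subtype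
  exact Finite.of_equiv Γ₂ (Subgroup.equivMapOfInjective Γ e.toMonoidHom e.injective).symm
end

section
/- Let $V$ be a finite-dimensional real normed vector space, $X = \mathbb{P}(V)$ with the metric $d(x_1,x_2) = \inf\{\|v_1 - v_2\| : v_i \in x_i, \|v_i\|=1\}$. Let $g$ be a nonzero endomorphism of $V$, $x^+ \in X$, $W$ a hyperplane of $V$, $Y = \mathbb{P}(W)$, and $\varepsilon > 0$. Set $b^\varepsilon = \{x \in X : d(x, x^+) \leq \varepsilon\}$ and $B^\varepsilon = \{x \in X : \delta(x, Y) \geq \varepsilon\}$ where $\delta(x,Y) = \inf_{y \in Y} d(x,y)$. Suppose $\delta(x^+, Y) \geq 6\varepsilon$, $g(B^\varepsilon) \subseteq b^\varepsilon$, and the restriction of the induced map of $g$ to $B^\varepsilon$ is $\varepsilon$-Lipschitz. Then $g$ is proximal, its attracting fixed point $x_g^+$ satisfies $d(x_g^+, x^+) \leq \varepsilon$, and the repelling projective hyperplane $X_g^< = \mathbb{P}(V_g^<)$ satisfies $\delta(X_g^<, B^\varepsilon) > 0$, i.e. $X_g^< \cap B^\varepsilon = \emptyset$. -/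
open Filter Topology

variable {V : Type*} [NormedAddCommGroup V] [NormedSpace ℝ V]

/-- The distance between two lines (points of `ℙ(V)`), viewed as submodules:
`d(x₁, x₂) = inf {‖v₁ - v₂‖ : vᵢ ∈ xᵢ, ‖vᵢ‖ = 1}`. -/
noncomputable def projDist (x₁ x₂ : Submodule ℝ V) : ℝ :=
  sInf {r : ℝ | ∃ v₁ ∈ x₁, ∃ v₂ ∈ x₂, ‖v₁‖ = 1 ∧ ‖v₂‖ = 1 ∧ r = ‖v₁ - v₂‖}

/-- The distance `δ(x, ℙ(W))` from a line `x` to the projectivization of a subspace `W`. -/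
noncomputable def projDelta (x W : Submodule ℝ V) : ℝ :=
  sInf {r : ℝ | ∃ y : Submodule ℝ V, y ≤ W ∧ Module.finrank ℝ y = 1 ∧ r = projDist x y}

/-- The spectral radius of an endomorphism, via Gelfand's formula; in finite dimension
this is the maximal modulus `λ₁(g)` of the complex eigenvalues of `g`. -/
noncomputable def specRad (g : V →L[ℝ] V) : ℝ :=
  Filter.limsup (fun n : ℕ => ‖g ^ n‖ ^ ((1 : ℝ) / n)) Filter.atTop

/-- `g` is proximal with top (real) eigenvalue `α`, attracting eigenvector `v`, and
invariant complementary hyperplane `W` on which the spectral radius is `< |α|`; this says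
exactly that `α` is the unique eigenvalue of maximal modulus and has multiplicity one. -/
def IsProximalWith (g : V →L[ℝ] V) (α : ℝ) (v : V) (W : Submodule ℝ V) : Prop :=
  v ≠ 0 ∧ g v = α • v ∧ IsCompl (Submodule.span ℝ {v}) W ∧
  ∃ gW : W →L[ℝ] W, (∀ w : W, g (w : V) = (gW w : V)) ∧ specRad gW < |α|

/-- `g` is `ε`-proximal with data `(α, v, W)`: it is proximal, `δ(x_g⁺, X_g^<) ≥ 2ε`,
`g` maps `B_g^ε` into `b_g^ε`, and `g` is `ε`-Lipschitz on `B_g^ε` (in `ℙ(V)`). -/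
def IsEpsProximalWith (g : V →L[ℝ] V) (ε α : ℝ) (v : V) (W : Submodule ℝ V) : Prop :=
  IsProximalWith g α v W ∧ 2 * ε ≤ projDelta (Submodule.span ℝ {v}) W ∧
  (∀ x : Submodule ℝ V, Module.finrank ℝ x = 1 → ε ≤ projDelta x W →
    Submodule.map (g : V →ₗ[ℝ] V) x ≠ ⊥ ∧
      projDist (Submodule.map (g : V →ₗ[ℝ] V) x) (Submodule.span ℝ {v}) ≤ ε) ∧
  (∀ x y : Submodule ℝ V, Module.finrank ℝ x = 1 → Module.finrank ℝ y = 1 →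
    ε ≤ projDelta x W → ε ≤ projDelta y W →
    projDist (Submodule.map (g : V →ₗ[ℝ] V) x) (Submodule.map (g : V →ₗ[ℝ] V) y) ≤
      ε * projDist x y)

/-- `g` is `ε`-proximal. -/
def IsEpsProximal (g : V →L[ℝ] V) (ε : ℝ) : Prop :=
  ∃ α v W, IsEpsProximalWith g ε α v W

open Module Metric

lemma span_neg_singleton (b : V) : Submodule.span ℝ {-b} = Submodule.span ℝ {b} := by
  have : (-1 : ℝ) • b = -b := by simp
  rw [← this, Submodule.span_singleton_smul_eq (by simp : IsUnit (-1 : ℝ))]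

lemma line_exists_unit {x : Submodule ℝ V} (hx : Module.finrank ℝ x = 1) :
    ∃ a : V, ‖a‖ = 1 ∧ x = Submodule.span ℝ {a} := by
  haveI : Module.Free ℝ x := Module.Free.of_divisionRing ℝ x
  obtain ⟨v, hv0, hvgen⟩ := finrank_eq_one_iff'.mp hx
  have hv0' : (v : V) ≠ 0 := by simpa using hv0
  have hx' : x = Submodule.span ℝ {(v : V)} := by
    apply le_antisymm
    · intro w hw
      obtain ⟨c, hc⟩ := hvgen ⟨w, hw⟩
      exact Submodule.mem_span_singleton.2 ⟨c, by simpa using congrArg (fun z : x => (z : V)) hc⟩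
    · rw [Submodule.span_le, Set.singleton_subset_iff]; exact v.2
  refine ⟨‖(v : V)‖⁻¹ • v, ?_, ?_⟩
  · rw [norm_smul, norm_inv, norm_norm, inv_mul_cancel₀ (norm_ne_zero_iff.2 hv0')]
  · exact hx'.trans (Submodule.span_singleton_smul_eq
      (isUnit_iff_ne_zero.2 (inv_ne_zero (norm_ne_zero_iff.2 hv0'))) _).symm

lemma unit_mem_span {a u : V} (ha : ‖a‖ = 1) (hu : u ∈ Submodule.span ℝ {a}) (hu1 : ‖u‖ = 1) :
    u = a ∨ u = -a := by
  obtain ⟨c, rfl⟩ := Submodule.mem_span_singleton.1 hu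
  have : |c| = 1 := by rwa [norm_smul, ha, mul_one, Real.norm_eq_abs] at hu1
  rcases abs_eq (by norm_num : (0:ℝ) ≤ 1) |>.1 this with h | h
  · left; rw [h, one_smul]
  · right; rw [h]; simp

lemma projDist_spans {a b : V} (ha : ‖a‖ = 1) (hb : ‖b‖ = 1) :
    projDist (Submodule.span ℝ {a}) (Submodule.span ℝ {b}) = min ‖a - b‖ ‖a + b‖ := by
  have hset : {r : ℝ | ∃ v₁ ∈ Submodule.span ℝ {a}, ∃ v₂ ∈ Submodule.span ℝ {b},
      ‖v₁‖ = 1 ∧ ‖v₂‖ = 1 ∧ r = ‖v₁ - v₂‖} = {‖a - b‖, ‖a + b‖} := by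
    ext r
    constructor
    · rintro ⟨v₁, hv₁, v₂, hv₂, h1, h2, rfl⟩
      rcases unit_mem_span ha hv₁ h1 with h | h <;>
        rcases unit_mem_span hb hv₂ h2 with h' | h' <;> rw [h, h']
      · exact Set.mem_insert _ _
      · rw [sub_neg_eq_add]; simp
      · rw [show -a - b = -(a + b) by abel, norm_neg]; simp
      · rw [show -a - -b = -(a - b) by abel, norm_neg]; exact Set.mem_insert _ _
    · rintro (rfl | rfl)
      · exact ⟨a, Submodule.mem_span_singleton_self a, b, Submodule.mem_span_singleton_self b,
          ha, hb, rfl⟩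
      · exact ⟨a, Submodule.mem_span_singleton_self a, -b, Submodule.neg_mem _
          (Submodule.mem_span_singleton_self b), ha, by simpa using hb, by simp [sub_neg_eq_add]⟩
  rw [projDist, hset, csInf_pair]

lemma projDist_nonneg (x y : Submodule ℝ V) : 0 ≤ projDist x y := by
  apply Real.sInf_nonneg
  rintro r ⟨v₁, _, v₂, _, _, _, rfl⟩
  exact norm_nonneg _

lemma projDelta_nonneg (x W : Submodule ℝ V) : 0 ≤ projDelta x W := by
  apply Real.sInf_nonneg
  rintro r ⟨y, _, _, rfl⟩
  exact projDist_nonneg _ _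

lemma projDist_le_norm {a b : V} (ha : ‖a‖ = 1) (hb : ‖b‖ = 1) :
    projDist (Submodule.span ℝ {a}) (Submodule.span ℝ {b}) ≤ ‖a - b‖ := by
  rw [projDist_spans ha hb]; exact min_le_left _ _

lemma projDist_match {a b : V} (ha : ‖a‖ = 1) (hb : ‖b‖ = 1) :
    ∃ b', ‖b'‖ = 1 ∧ Submodule.span ℝ {b'} = Submodule.span ℝ {b} ∧
      projDist (Submodule.span ℝ {a}) (Submodule.span ℝ {b}) = ‖a - b'‖ := by
  rw [projDist_spans ha hb]
  rcases le_total ‖a - b‖ ‖a + b‖ with h | h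
  · exact ⟨b, hb, rfl, min_eq_left h⟩
  · exact ⟨-b, by simpa using hb, span_neg_singleton b,
      by rw [min_eq_right h, sub_neg_eq_add]⟩

lemma projDist_comm (x y : Submodule ℝ V) : projDist x y = projDist y x := by
  unfold projDist
  congr 1
  ext r
  constructor <;> rintro ⟨v₁, h₁, v₂, h₂, n₁, n₂, rfl⟩ <;>
    exact ⟨v₂, h₂, v₁, h₁, n₂, n₁, (norm_sub_rev _ _)⟩

lemma projDist_le_two {x y : Submodule ℝ V} (hx : Module.finrank ℝ x = 1)
    (hy : Module.finrank ℝ y = 1) : projDist x y ≤ 2 := by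
  obtain ⟨a, ha, rfl⟩ := line_exists_unit hx
  obtain ⟨b, hb, rfl⟩ := line_exists_unit hy
  calc projDist _ _ ≤ ‖a - b‖ := projDist_le_norm ha hb
  _ ≤ ‖a‖ + ‖b‖ := norm_sub_le _ _
  _ = 2 := by rw [ha, hb]; norm_num

lemma projDist_triangle {x y z : Submodule ℝ V} (hx : Module.finrank ℝ x = 1)
    (hy : Module.finrank ℝ y = 1) (hz : Module.finrank ℝ z = 1) :
    projDist x z ≤ projDist x y + projDist y z := by
  obtain ⟨a, ha, rfl⟩ := line_exists_unit hx
  obtain ⟨b, hb, rfl⟩ := line_exists_unit hy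
  obtain ⟨c, hc, rfl⟩ := line_exists_unit hz
  obtain ⟨b', hb', hbspan, hab⟩ := projDist_match ha hb
  obtain ⟨c', hc', hcspan, hbc⟩ := projDist_match hb' hc
  have h1 : projDist (Submodule.span ℝ {b}) (Submodule.span ℝ {c}) = ‖b' - c'‖ := by
    rw [← hbspan]; exact hbc
  calc projDist (Submodule.span ℝ {a}) (Submodule.span ℝ {c})
      = projDist (Submodule.span ℝ {a}) (Submodule.span ℝ {c'}) := by rw [hcspan]
    _ ≤ ‖a - c'‖ := projDist_le_norm ha hc'
    _ ≤ ‖a - b'‖ + ‖b' - c'‖ := norm_sub_le_norm_sub_add_norm_sub a b' c'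
    _ = _ := by rw [hab, h1]

lemma projDelta_le {x y W : Submodule ℝ V} (hyW : y ≤ W) (hy : Module.finrank ℝ y = 1) :
    projDelta x W ≤ projDist x y := by
  apply csInf_le
  · exact ⟨0, by rintro r ⟨y', _, _, rfl⟩; exact projDist_nonneg _ _⟩
  · exact ⟨y, hyW, hy, rfl⟩

lemma le_projDelta {x W : Submodule ℝ V} {c : ℝ}
    (hne : ∃ y : Submodule ℝ V, y ≤ W ∧ Module.finrank ℝ y = 1)
    (h : ∀ y : Submodule ℝ V, y ≤ W → Module.finrank ℝ y = 1 → c ≤ projDist x y) :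
    c ≤ projDelta x W := by
  apply le_csInf
  · obtain ⟨y, h1, h2⟩ := hne; exact ⟨projDist x y, y, h1, h2, rfl⟩
  · rintro r ⟨y, h1, h2, rfl⟩; exact h y h1 h2

lemma projDelta_lower {x x' W : Submodule ℝ V} (hx : Module.finrank ℝ x = 1)
    (hx' : Module.finrank ℝ x' = 1)
    (hne : ∃ y : Submodule ℝ V, y ≤ W ∧ Module.finrank ℝ y = 1) {c : ℝ}
    (hc : c ≤ projDelta x W) : c - projDist x x' ≤ projDelta x' W := by
  apply le_projDelta hne
  intro y hyW hy
  have h1 : projDist x y ≤ projDist x x' + projDist x' y := projDist_triangle hx hx' hy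
  have h2 : c ≤ projDist x y := le_trans hc (projDelta_le hyW hy)
  linarith

lemma infDist_add_le {v z : V} (hz : z ∈ Submodule.span ℝ {v}) (w : V) :
    infDist (w + z) ((Submodule.span ℝ {v} : Submodule ℝ V) : Set V) ≤
      infDist w ((Submodule.span ℝ {v} : Submodule ℝ V) : Set V) := by
  apply le_of_forall_pos_le_add
  intro η hη
  have hne : ((Submodule.span ℝ {v} : Submodule ℝ V) : Set V).Nonempty :=
    ⟨0, Submodule.zero_mem _⟩
  obtain ⟨p, hp, hdp⟩ := (infDist_lt_iff hne).1
    (lt_add_of_pos_right (infDist w ((Submodule.span ℝ {v} : Submodule ℝ V) : Set V)) hη)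
  calc infDist (w + z) ((Submodule.span ℝ {v} : Submodule ℝ V) : Set V)
      ≤ dist (w + z) (p + z) := infDist_le_dist_of_mem (Submodule.add_mem _ hp hz)
    _ = dist w p := dist_add_right w p z
    _ ≤ _ := le_of_lt hdp

lemma infDist_span_add {v z : V} (hz : z ∈ Submodule.span ℝ {v}) (w : V) :
    infDist (w + z) ((Submodule.span ℝ {v} : Submodule ℝ V) : Set V) =
      infDist w ((Submodule.span ℝ {v} : Submodule ℝ V) : Set V) := by
  refine le_antisymm (infDist_add_le hz w) ?_
  have := infDist_add_le (Submodule.neg_mem _ hz) (w + z)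
  simpa using this

lemma infDist_smul_le {v : V} (c : ℝ) (w : V) :
    infDist (c • w) ((Submodule.span ℝ {v} : Submodule ℝ V) : Set V) ≤
      |c| * infDist w ((Submodule.span ℝ {v} : Submodule ℝ V) : Set V) := by
  rcases eq_or_ne c 0 with rfl | hc
  · simp [infDist_zero_of_mem (Submodule.zero_mem (Submodule.span ℝ {v}))]
  · apply le_of_forall_pos_le_add
    intro η hη
    have hne : ((Submodule.span ℝ {v} : Submodule ℝ V) : Set V).Nonempty :=
      ⟨0, Submodule.zero_mem _⟩
    have hcpos : 0 < |c| := abs_pos.2 hc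
    obtain ⟨p, hp, hdp⟩ := (infDist_lt_iff hne).1
      (lt_add_of_pos_right (infDist w ((Submodule.span ℝ {v} : Submodule ℝ V) : Set V))
        (div_pos hη hcpos))
    calc infDist (c • w) ((Submodule.span ℝ {v} : Submodule ℝ V) : Set V)
        ≤ dist (c • w) (c • p) := infDist_le_dist_of_mem (Submodule.smul_mem _ c hp)
      _ = |c| * dist w p := by rw [dist_smul₀, Real.norm_eq_abs]
      _ ≤ |c| * (infDist w ((Submodule.span ℝ {v} : Submodule ℝ V) : Set V) + η / |c|) :=
          mul_le_mul_of_nonneg_left (le_of_lt hdp) (abs_nonneg c)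
      _ = _ := by field_simp

lemma infDist_span_smul {v : V} (c : ℝ) (w : V) :
    infDist (c • w) ((Submodule.span ℝ {v} : Submodule ℝ V) : Set V) =
      |c| * infDist w ((Submodule.span ℝ {v} : Submodule ℝ V) : Set V) := by
  rcases eq_or_ne c 0 with rfl | hc
  · simp [infDist_zero_of_mem (Submodule.zero_mem (Submodule.span ℝ {v}))]
  · refine le_antisymm (infDist_smul_le c w) ?_
    have h := infDist_smul_le (v := v) c⁻¹ (c • w)
    rw [inv_smul_smul₀ hc, abs_inv] at h
    have hcpos : 0 < |c| := abs_pos.2 hc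
    calc |c| * infDist w ((Submodule.span ℝ {v} : Submodule ℝ V) : Set V)
        ≤ |c| * (|c|⁻¹ * infDist (c • w) ((Submodule.span ℝ {v} : Submodule ℝ V) : Set V)) :=
          mul_le_mul_of_nonneg_left h (abs_nonneg c)
      _ = _ := by field_simp

lemma infDist_div_le_projDist {v z : V} (hv : ‖v‖ = 1) (hz : z ≠ 0) :
    infDist z ((Submodule.span ℝ {v} : Submodule ℝ V) : Set V) / ‖z‖ ≤
      projDist (Submodule.span ℝ {z}) (Submodule.span ℝ {v}) := by
  have hzn : (0 : ℝ) < ‖z‖ := norm_pos_iff.2 hz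
  have ha : ‖‖z‖⁻¹ • z‖ = 1 := by
    rw [norm_smul, norm_inv, norm_norm, inv_mul_cancel₀ (ne_of_gt hzn)]
  have hspan : Submodule.span ℝ {‖z‖⁻¹ • z} = Submodule.span ℝ {z} :=
    Submodule.span_singleton_smul_eq (isUnit_iff_ne_zero.2 (inv_ne_zero (ne_of_gt hzn))) _
  rw [← hspan, projDist_spans ha hv]
  have h1 : infDist z ((Submodule.span ℝ {v} : Submodule ℝ V) : Set V) ≤ ‖z - ‖z‖ • v‖ := by
    have := infDist_le_dist_of_mem (x := z)
      (Submodule.smul_mem (Submodule.span ℝ {v}) ‖z‖ (Submodule.mem_span_singleton_self v))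
    rwa [dist_eq_norm] at this
  have h2 : infDist z ((Submodule.span ℝ {v} : Submodule ℝ V) : Set V) ≤ ‖z + ‖z‖ • v‖ := by
    have := infDist_le_dist_of_mem (x := z)
      (Submodule.neg_mem _ (Submodule.smul_mem (Submodule.span ℝ {v}) ‖z‖
        (Submodule.mem_span_singleton_self v)))
    rwa [dist_eq_norm, sub_neg_eq_add] at this
  apply le_min
  · have heq : ‖z‖⁻¹ • z - v = ‖z‖⁻¹ • (z - ‖z‖ • v) := by
      rw [smul_sub, smul_smul, inv_mul_cancel₀ (ne_of_gt hzn), one_smul]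
    rw [heq, norm_smul, norm_inv, norm_norm, div_eq_inv_mul]
    exact mul_le_mul_of_nonneg_left h1 (inv_nonneg.2 (le_of_lt hzn))
  · have heq : ‖z‖⁻¹ • z + v = ‖z‖⁻¹ • (z + ‖z‖ • v) := by
      rw [smul_add, smul_smul, inv_mul_cancel₀ (ne_of_gt hzn), one_smul]
    rw [heq, norm_smul, norm_inv, norm_norm, div_eq_inv_mul]
    exact mul_le_mul_of_nonneg_left h2 (inv_nonneg.2 (le_of_lt hzn))


set_option maxHeartbeats 3000000
set_option synthInstance.maxHeartbeats 400000

/-- Lemma 6.2: a sufficient condition for proximality. If `g ≠ 0`, `x⁺` is a line, `W` a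
hyperplane with `δ(x⁺, ℙ(W)) ≥ 6ε`, `g` maps `B^ε = {x : δ(x, ℙ(W)) ≥ ε}` into
`b^ε = {x : d(x, x⁺) ≤ ε}` and is `ε`-Lipschitz on `B^ε`, then `g` is proximal, its
attracting line satisfies `d(x_g⁺, x⁺) ≤ ε`, and its repelling projective hyperplane
misses `B^ε`. -/
theorem stmt_13 [FiniteDimensional ℝ V] (g : V →L[ℝ] V) (hg : g ≠ 0) (ε : ℝ) (hε : 0 < ε)
    (xplus : Submodule ℝ V) (hxplus : Module.finrank ℝ xplus = 1)
    (W : Submodule ℝ V) (hW : Module.finrank ℝ W + 1 = Module.finrank ℝ V)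
    (hsep : 6 * ε ≤ projDelta xplus W)
    (hmap : ∀ x : Submodule ℝ V, Module.finrank ℝ x = 1 → ε ≤ projDelta x W →
      Submodule.map (g : V →ₗ[ℝ] V) x ≠ ⊥ ∧
        projDist (Submodule.map (g : V →ₗ[ℝ] V) x) xplus ≤ ε)
    (hlip : ∀ x y : Submodule ℝ V, Module.finrank ℝ x = 1 → Module.finrank ℝ y = 1 →
      ε ≤ projDelta x W → ε ≤ projDelta y W →
      projDist (Submodule.map (g : V →ₗ[ℝ] V) x) (Submodule.map (g : V →ₗ[ℝ] V) y) ≤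
        ε * projDist x y) :
    ∃ (α : ℝ) (v : V) (W' : Submodule ℝ V), IsProximalWith g α v W' ∧
      projDist (Submodule.span ℝ {v}) xplus ≤ ε ∧
      ∀ x : Submodule ℝ V, Module.finrank ℝ x = 1 → x ≤ W' → projDelta x W < ε := by
  classical
  set gl : V →ₗ[ℝ] V := (g : V →ₗ[ℝ] V) with hgl
  set mg : Submodule ℝ V → Submodule ℝ V := fun x => Submodule.map gl x with hmg
  have hmap' : ∀ x : Submodule ℝ V, Module.finrank ℝ x = 1 → ε ≤ projDelta x W →
      mg x ≠ ⊥ ∧ projDist (mg x) xplus ≤ ε := hmap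
  have hlip' : ∀ x y : Submodule ℝ V, Module.finrank ℝ x = 1 → Module.finrank ℝ y = 1 →
      ε ≤ projDelta x W → ε ≤ projDelta y W →
      projDist (mg x) (mg y) ≤ ε * projDist x y := hlip
  -- a line inside W exists
  have hline : ∃ y : Submodule ℝ V, y ≤ W ∧ Module.finrank ℝ y = 1 := by
    by_contra h
    push_neg at h
    have hempty : {r : ℝ | ∃ y : Submodule ℝ V, y ≤ W ∧ Module.finrank ℝ y = 1 ∧
        r = projDist xplus y} = ∅ := by
      ext r
      simp only [Set.mem_setOf_eq, Set.mem_empty_iff_false, iff_false]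
      rintro ⟨y, h1, h2, _⟩
      exact h y h1 h2
    rw [projDelta, hempty, Real.sInf_empty] at hsep
    linarith
  obtain ⟨y₀, hy₀W, hy₀⟩ := hline
  have hε1 : ε ≤ 1 / 3 := by
    have h2 : projDelta xplus W ≤ 2 :=
      le_trans (projDelta_le hy₀W hy₀) (projDist_le_two hxplus hy₀)
    linarith
  have hεlt1 : ε < 1 := by linarith
  have mg_span : ∀ z : V, mg (Submodule.span ℝ {z}) = Submodule.span ℝ {gl z} := by
    intro z
    show Submodule.map gl (Submodule.span ℝ {z}) = _
    rw [Submodule.map_span, Set.image_singleton]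
  have rank_mg : ∀ x : Submodule ℝ V, Module.finrank ℝ x = 1 → mg x ≠ ⊥ →
      Module.finrank ℝ (mg x) = 1 := by
    intro x hx hbot
    obtain ⟨a, ha, rfl⟩ := line_exists_unit hx
    rw [mg_span a] at hbot ⊢
    have hga : gl a ≠ 0 := by
      intro h
      rw [h, Submodule.span_zero_singleton] at hbot
      exact hbot rfl
    exact finrank_span_singleton hga
  have step : ∀ x : Submodule ℝ V, Module.finrank ℝ x = 1 → ε ≤ projDelta x W →
      Module.finrank ℝ (mg x) = 1 ∧ ε ≤ projDelta (mg x) W ∧ projDist (mg x) xplus ≤ ε := by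
    intro x hx hδ
    obtain ⟨hbot, hnear⟩ := hmap' x hx hδ
    have h1 : Module.finrank ℝ (mg x) = 1 := rank_mg x hx hbot
    refine ⟨h1, ?_, hnear⟩
    have h3 := projDelta_lower hxplus h1 ⟨y₀, hy₀W, hy₀⟩ hsep
    have h4 : projDist xplus (mg x) = projDist (mg x) xplus := projDist_comm _ _
    linarith
  have hB0 : ε ≤ projDelta xplus W := le_trans (by linarith) hsep
  have iterB : ∀ (x : Submodule ℝ V), Module.finrank ℝ x = 1 → ε ≤ projDelta x W → ∀ n : ℕ,
      Module.finrank ℝ (mg^[n] x) = 1 ∧ ε ≤ projDelta (mg^[n] x) W ∧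
        (1 ≤ n → projDist (mg^[n] x) xplus ≤ ε) := by
    intro x hx hδ n
    induction n with
    | zero => exact ⟨hx, hδ, fun h => absurd h (by norm_num)⟩
    | succ n ih =>
      rw [Function.iterate_succ_apply']
      obtain ⟨h1, h2, h3⟩ := step _ ih.1 ih.2.1
      exact ⟨h1, h2, fun _ => h3⟩
  have hX1 : ∀ n, Module.finrank ℝ (mg^[n] xplus) = 1 := fun n => (iterB xplus hxplus hB0 n).1
  have hXδ : ∀ n, ε ≤ projDelta (mg^[n] xplus) W := fun n => (iterB xplus hxplus hB0 n).2.1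
  have geom : ∀ n, projDist (mg^[n] xplus) (mg^[n + 1] xplus) ≤ 2 * ε ^ n := by
    intro n
    induction n with
    | zero => simpa using projDist_le_two (hX1 0) (hX1 1)
    | succ n ih =>
      have hc := hlip' _ _ (hX1 n) (hX1 (n + 1)) (hXδ n) (hXδ (n + 1))
      rw [← Function.iterate_succ_apply' mg n, ← Function.iterate_succ_apply' mg (n + 1)] at hc
      have h2 : ε * projDist (mg^[n] xplus) (mg^[n + 1] xplus) ≤ ε * (2 * ε ^ n) :=
        mul_le_mul_of_nonneg_left ih (le_of_lt hε)
      have h3 : ε * (2 * ε ^ n) = 2 * ε ^ (n + 1) := by ring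
      linarith
  -- choice of unit vectors
  have hT0 : ∃ a : V, ‖a‖ = 1 ∧ mg^[0] xplus = Submodule.span ℝ {a} := line_exists_unit (hX1 0)
  have hTstep : ∀ (n : ℕ) (a : V), ‖a‖ = 1 → mg^[n] xplus = Submodule.span ℝ {a} →
      ∃ b : V, (‖b‖ = 1 ∧ mg^[n + 1] xplus = Submodule.span ℝ {b}) ∧
        ‖a - b‖ = projDist (mg^[n] xplus) (mg^[n + 1] xplus) := by
    intro n a ha hspan
    obtain ⟨b₀, hb₀, hspan'⟩ := line_exists_unit (hX1 (n + 1))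
    obtain ⟨b', hb', hbspan, hmatch⟩ := projDist_match ha hb₀
    refine ⟨b', ⟨hb', by rw [hspan', ← hbspan]⟩, ?_⟩
    rw [hspan, hspan']
    exact hmatch.symm
  choose F hF1 hF2 using hTstep
  let T : ℕ → Type _ := fun n => {a : V // ‖a‖ = 1 ∧ mg^[n] xplus = Submodule.span ℝ {a}}
  let vs : ∀ n : ℕ, T n := fun n => Nat.rec
    (⟨Classical.choose hT0, Classical.choose_spec hT0⟩ : T 0)
    (fun n a => ⟨F n a.1 a.2.1 a.2.2, hF1 n a.1 a.2.1 a.2.2⟩) n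
  have hvs1 : ∀ n, ‖(vs n).1‖ = 1 := fun n => (vs n).2.1
  have hvs2 : ∀ n, mg^[n] xplus = Submodule.span ℝ {(vs n).1} := fun n => (vs n).2.2
  have hvsd : ∀ n, ‖(vs n).1 - (vs (n + 1)).1‖ =
      projDist (mg^[n] xplus) (mg^[n + 1] xplus) :=
    fun n => hF2 n (vs n).1 (vs n).2.1 (vs n).2.2
  have hcauchy : CauchySeq (fun n => (vs n).1) := by
    apply cauchySeq_of_le_geometric ε 2 hεlt1
    intro n
    rw [dist_eq_norm, hvsd n]
    exact geom n
  obtain ⟨vL, hvL⟩ := cauchySeq_tendsto_of_complete hcauchy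
  have hnv : ‖vL‖ = 1 := by
    have h1 : Filter.Tendsto (fun n => ‖(vs n).1‖) atTop (𝓝 ‖vL‖) := hvL.norm
    have h2 : (fun n => ‖(vs n).1‖) = fun _ => (1 : ℝ) := funext hvs1
    rw [h2] at h1
    exact tendsto_nhds_unique h1 tendsto_const_nhds
  have hv0 : vL ≠ 0 := by
    intro h
    rw [h, norm_zero] at hnv
    norm_num at hnv
  have hrank_v : Module.finrank ℝ (Submodule.span ℝ {vL}) = 1 := finrank_span_singleton hv0
  have htail : Filter.Tendsto (fun n => ‖vL - (vs n).1‖) atTop (𝓝 0) := by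
    have h1 := hvL.const_sub vL
    rw [sub_self] at h1
    simpa using h1.norm
  have dv : ∀ n, projDist (Submodule.span ℝ {vL}) (mg^[n] xplus) ≤ ‖vL - (vs n).1‖ := by
    intro n
    have h := projDist_le_norm hnv (hvs1 n)
    rwa [← hvs2 n] at h
  have C1 : projDist (Submodule.span ℝ {vL}) xplus ≤ ε := by
    have hev : ∀ n : ℕ, projDist (Submodule.span ℝ {vL}) xplus ≤ ‖vL - (vs (n + 1)).1‖ + ε := by
      intro n
      have t1 := projDist_triangle hrank_v (hX1 (n + 1)) hxplus
      have t2 := (iterB xplus hxplus hB0 (n + 1)).2.2 (by omega)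
      have t3 := dv (n + 1)
      linarith
    have hlim : Filter.Tendsto (fun n : ℕ => ‖vL - (vs (n + 1)).1‖ + ε) atTop (𝓝 (0 + ε)) :=
      (htail.comp (tendsto_add_atTop_nat 1)).add tendsto_const_nhds
    rw [zero_add] at hlim
    exact ge_of_tendsto hlim (Filter.Eventually.of_forall hev)
  have C2 : 5 * ε ≤ projDelta (Submodule.span ℝ {vL}) W := by
    have h3 := projDelta_lower hxplus hrank_v ⟨y₀, hy₀W, hy₀⟩ hsep
    have h4 : projDist xplus (Submodule.span ℝ {vL}) =
        projDist (Submodule.span ℝ {vL}) xplus := projDist_comm _ _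
    linarith
  have hBv : ε ≤ projDelta (Submodule.span ℝ {vL}) W := by linarith
  have hgv0 : gl vL ≠ 0 := by
    have hbot := (hmap' (Submodule.span ℝ {vL}) hrank_v hBv).1
    intro h
    rw [mg_span vL, h, Submodule.span_zero_singleton] at hbot
    exact hbot rfl
  have hα0 : projDist (Submodule.span ℝ {gl vL}) (Submodule.span ℝ {vL}) = 0 := by
    have hr1 : Module.finrank ℝ (Submodule.span ℝ {gl vL}) = 1 := finrank_span_singleton hgv0
    refine le_antisymm ?_ (projDist_nonneg _ _)
    have hev : ∀ n : ℕ, projDist (Submodule.span ℝ {gl vL}) (Submodule.span ℝ {vL}) ≤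
        ε * ‖vL - (vs n).1‖ + ‖vL - (vs (n + 1)).1‖ := by
      intro n
      have t1 : projDist (Submodule.span ℝ {gl vL}) (Submodule.span ℝ {vL}) ≤
          projDist (Submodule.span ℝ {gl vL}) (mg^[n + 1] xplus) +
            projDist (mg^[n + 1] xplus) (Submodule.span ℝ {vL}) :=
        projDist_triangle hr1 (hX1 (n + 1)) hrank_v
      have t2 : projDist (Submodule.span ℝ {gl vL}) (mg^[n + 1] xplus) ≤
          ε * projDist (Submodule.span ℝ {vL}) (mg^[n] xplus) := by
        have h5 := hlip' (Submodule.span ℝ {vL}) (mg^[n] xplus) hrank_v (hX1 n) hBv (hXδ n)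
        rw [mg_span vL] at h5
        rw [Function.iterate_succ_apply']
        exact h5
      have t3 : ε * projDist (Submodule.span ℝ {vL}) (mg^[n] xplus) ≤ ε * ‖vL - (vs n).1‖ :=
        mul_le_mul_of_nonneg_left (dv n) (le_of_lt hε)
      have t4 : projDist (mg^[n + 1] xplus) (Submodule.span ℝ {vL}) ≤ ‖vL - (vs (n + 1)).1‖ := by
        rw [projDist_comm]
        exact dv (n + 1)
      linarith
    have hlim : Filter.Tendsto (fun n : ℕ => ε * ‖vL - (vs n).1‖ + ‖vL - (vs (n + 1)).1‖)
        atTop (𝓝 (ε * 0 + 0)) := (htail.const_mul ε).add (htail.comp (tendsto_add_atTop_nat 1))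
    rw [mul_zero, zero_add] at hlim
    exact ge_of_tendsto hlim (Filter.Eventually.of_forall hev)
  have hαex : ∃ α : ℝ, α ≠ 0 ∧ gl vL = α • vL := by
    have hzn : (0 : ℝ) < ‖gl vL‖ := norm_pos_iff.2 hgv0
    have ha : ‖‖gl vL‖⁻¹ • gl vL‖ = 1 := by
      rw [norm_smul, norm_inv, norm_norm, inv_mul_cancel₀ (ne_of_gt hzn)]
    have hspan : Submodule.span ℝ {‖gl vL‖⁻¹ • gl vL} = Submodule.span ℝ {gl vL} :=
      Submodule.span_singleton_smul_eq (isUnit_iff_ne_zero.2 (inv_ne_zero (ne_of_gt hzn))) _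
    rw [← hspan, projDist_spans ha hnv] at hα0
    set u := ‖gl vL‖⁻¹ • gl vL with hu
    have huv : u = vL ∨ u = -vL := by
      rcases min_cases ‖u - vL‖ ‖u + vL‖ with ⟨h1, _⟩ | ⟨h1, _⟩
      · left
        rw [h1] at hα0
        exact sub_eq_zero.1 (norm_eq_zero.1 hα0)
      · right
        rw [h1] at hα0
        have h6 := norm_eq_zero.1 hα0
        rwa [add_eq_zero_iff_eq_neg] at h6
    have hrec : gl vL = ‖gl vL‖ • u := by
      rw [hu, smul_smul, mul_inv_cancel₀ (ne_of_gt hzn), one_smul]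
    rcases huv with h | h
    · refine ⟨‖gl vL‖, ne_of_gt hzn, ?_⟩
      calc gl vL = ‖gl vL‖ • u := hrec
        _ = ‖gl vL‖ • vL := by rw [h]
    · refine ⟨-‖gl vL‖, by simpa using ne_of_gt hzn, ?_⟩
      calc gl vL = ‖gl vL‖ • u := hrec
        _ = (-‖gl vL‖) • vL := by rw [h, smul_neg, neg_smul]
  obtain ⟨α, hαne, hαv⟩ := hαex
  have habs : (0:ℝ) < |α| := abs_pos.2 hαne
  have gfix : mg (Submodule.span ℝ {vL}) = Submodule.span ℝ {vL} := by
    rw [mg_span vL, hαv]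
    exact Submodule.span_singleton_smul_eq (isUnit_iff_ne_zero.2 hαne) _
  have glpow_v : ∀ n : ℕ, (gl ^ n) vL = (α ^ n) • vL := by
    intro n
    induction n with
    | zero => simp
    | succ n ih =>
      rw [pow_succ, Module.End.mul_apply, hαv, map_smul, ih, smul_smul, pow_succ, mul_comm]
  have mg_iter_span : ∀ (z : V) (n : ℕ),
      mg^[n] (Submodule.span ℝ {z}) = Submodule.span ℝ {(gl ^ n) z} := by
    intro z n
    induction n with
    | zero => simp
    | succ n ih =>
      rw [Function.iterate_succ_apply', ih, mg_span, ← Module.End.mul_apply, ← pow_succ']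
  have ginv_span : ∀ (n : ℕ) (q : V), q ∈ Submodule.span ℝ {vL} →
      (gl ^ n) q ∈ Submodule.span ℝ {vL} := by
    intro n q hq
    obtain ⟨c, rfl⟩ := Submodule.mem_span_singleton.1 hq
    rw [map_smul, glpow_v]
    exact Submodule.smul_mem _ _ (Submodule.smul_mem _ _ (Submodule.mem_span_singleton_self vL))
  have iterC : ∀ (x : Submodule ℝ V), Module.finrank ℝ x = 1 → ε ≤ projDelta x W → ∀ n : ℕ,
      projDist (mg^[n] x) (Submodule.span ℝ {vL}) ≤
        ε ^ n * projDist x (Submodule.span ℝ {vL}) := by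
    intro x hx hδ n
    induction n with
    | zero => simp
    | succ n ih =>
      have h1 := (iterB x hx hδ n).1
      have h2 := (iterB x hx hδ n).2.1
      have hc := hlip' _ _ h1 hrank_v h2 hBv
      rw [gfix] at hc
      rw [Function.iterate_succ_apply']
      have h3 : ε * projDist (mg^[n] x) (Submodule.span ℝ {vL}) ≤
          ε * (ε ^ n * projDist x (Submodule.span ℝ {vL})) :=
        mul_le_mul_of_nonneg_left ih (le_of_lt hε)
      have h4 : ε * (ε ^ n * projDist x (Submodule.span ℝ {vL})) =
          ε ^ (n + 1) * projDist x (Submodule.span ℝ {vL}) := by ring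
      linarith
  have key : ∀ (u : V) (n : ℕ),
      infDist ((gl ^ n) u) (Submodule.span ℝ {vL} : Set V) ≤
        8 * (ε * |α|) ^ n * infDist u (Submodule.span ℝ {vL} : Set V) := by
    intro u n
    have hpow : (0:ℝ) < 8 * (ε * |α|) ^ n := by positivity
    apply le_of_forall_pos_le_add
    intro η hη
    have hne : (Submodule.span ℝ {vL} : Set V).Nonempty := ⟨0, Submodule.zero_mem _⟩
    have hlt : infDist u (Submodule.span ℝ {vL} : Set V) <
        infDist u (Submodule.span ℝ {vL} : Set V) + η / (8 * (ε * |α|) ^ n) :=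
      lt_add_of_pos_right _ (div_pos hη hpow)
    obtain ⟨p, hp, hdp⟩ := (infDist_lt_iff hne).1 hlt
    have hDeq : infDist ((gl ^ n) u) (Submodule.span ℝ {vL} : Set V) =
        infDist ((gl ^ n) (u - p)) (Submodule.span ℝ {vL} : Set V) := by
      have h7 : (gl ^ n) u = (gl ^ n) (u - p) + (gl ^ n) p := by
        rw [map_sub]; abel
      rw [h7, infDist_span_add (ginv_span n p hp)]
    have hnu' : ‖u - p‖ < infDist u (Submodule.span ℝ {vL} : Set V) +
        η / (8 * (ε * |α|) ^ n) := by
      rw [← dist_eq_norm]; exact hdp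
    rcases eq_or_ne (u - p) 0 with h0 | h0
    · rw [hDeq, h0, map_zero, infDist_zero_of_mem (Submodule.zero_mem _)]
      have h8 : (0:ℝ) ≤ 8 * (ε * |α|) ^ n * infDist u (Submodule.span ℝ {vL} : Set V) :=
        mul_nonneg (le_of_lt hpow) infDist_nonneg
      linarith
    · have hnu : (0:ℝ) < ‖u - p‖ := norm_pos_iff.2 h0
      set gn := (gl ^ n) (u - p) with hgn
      set t := min (ε / (4 * ‖u - p‖)) (|α| ^ n / (‖gn‖ + 1)) with ht
      have htpos : 0 < t := lt_min (by positivity) (by positivity)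
      have htnu : t * ‖u - p‖ ≤ ε / 4 := by
        have h9 := min_le_left (ε / (4 * ‖u - p‖)) (|α| ^ n / (‖gn‖ + 1))
        calc t * ‖u - p‖ ≤ (ε / (4 * ‖u - p‖)) * ‖u - p‖ :=
            mul_le_mul_of_nonneg_right h9 (le_of_lt hnu)
          _ = ε / 4 := by field_simp
      have htgn : t * ‖gn‖ ≤ |α| ^ n := by
        have h9 := min_le_right (ε / (4 * ‖u - p‖)) (|α| ^ n / (‖gn‖ + 1))
        have h10 : (0:ℝ) < ‖gn‖ + 1 := by positivity
        calc t * ‖gn‖ ≤ (|α| ^ n / (‖gn‖ + 1)) * ‖gn‖ :=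
            mul_le_mul_of_nonneg_right h9 (norm_nonneg _)
          _ ≤ |α| ^ n := by
            rw [div_mul_eq_mul_div, div_le_iff₀ h10]
            nlinarith [pow_nonneg (abs_nonneg α) n, norm_nonneg gn]
      set z0 := vL + t • (u - p) with hz0
      have hz0ne : z0 ≠ 0 := by
        intro h
        have h11 : vL = -(t • (u - p)) := eq_neg_of_add_eq_zero_left h
        have h12 : (1:ℝ) = t * ‖u - p‖ := by
          rw [← hnv, h11, norm_neg, norm_smul, Real.norm_eq_abs, abs_of_pos htpos]
        linarith
      have hrank_z0 : Module.finrank ℝ (Submodule.span ℝ {z0}) = 1 := finrank_span_singleton hz0ne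
      have hN1 : |‖z0‖ - 1| ≤ t * ‖u - p‖ := by
        have h13 := abs_norm_sub_norm_le z0 vL
        rw [hnv] at h13
        have h14 : z0 - vL = t • (u - p) := by rw [hz0]; abel
        rw [h14, norm_smul, Real.norm_eq_abs, abs_of_pos htpos] at h13
        exact h13
      have hNhalf : (1:ℝ)/2 ≤ ‖z0‖ := by
        have h15 := abs_le.1 hN1
        have h16 := h15.1
        linarith
      have hNpos : (0:ℝ) < ‖z0‖ := norm_pos_iff.2 hz0ne
      have hunit : ‖‖z0‖⁻¹ • z0‖ = 1 := by
        rw [norm_smul, norm_inv, norm_norm, inv_mul_cancel₀ (ne_of_gt hNpos)]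
      have hspan0 : Submodule.span ℝ {‖z0‖⁻¹ • z0} = Submodule.span ℝ {z0} :=
        Submodule.span_singleton_smul_eq
          (isUnit_iff_ne_zero.2 (inv_ne_zero (ne_of_gt hNpos))) _
      have dup : projDist (Submodule.span ℝ {z0}) (Submodule.span ℝ {vL}) ≤
          4 * (t * ‖u - p‖) := by
        rw [← hspan0]
        refine le_trans (projDist_le_norm hunit hnv) ?_
        have h15 : ‖z0‖⁻¹ • z0 - vL = ‖z0‖⁻¹ • (z0 - ‖z0‖ • vL) := by
          rw [smul_sub, smul_smul, inv_mul_cancel₀ (ne_of_gt hNpos), one_smul]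
        have h16 : z0 - ‖z0‖ • vL = t • (u - p) + (1 - ‖z0‖) • vL := by
          rw [hz0, sub_smul, one_smul]; abel
        have h17 : ‖z0 - ‖z0‖ • vL‖ ≤ 2 * (t * ‖u - p‖) := by
          rw [h16]
          refine le_trans (norm_add_le _ _) ?_
          have h18 : ‖t • (u - p)‖ = t * ‖u - p‖ := by
            rw [norm_smul, Real.norm_eq_abs, abs_of_pos htpos]
          have h19 : ‖(1 - ‖z0‖) • vL‖ ≤ t * ‖u - p‖ := by
            rw [norm_smul, Real.norm_eq_abs, hnv, mul_one, abs_sub_comm]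
            exact hN1
          linarith
        rw [h15, norm_smul, norm_inv, norm_norm]
        have h20 : ‖z0‖⁻¹ ≤ 2 := by
          rw [inv_le_comm₀ hNpos (by norm_num)]
          linarith
        calc ‖z0‖⁻¹ * ‖z0 - ‖z0‖ • vL‖ ≤ 2 * (2 * (t * ‖u - p‖)) :=
            mul_le_mul h20 h17 (norm_nonneg _) (by norm_num)
          _ = 4 * (t * ‖u - p‖) := by ring
      have hδz0 : ε ≤ projDelta (Submodule.span ℝ {z0}) W := by
        have h22 := projDelta_lower hrank_v hrank_z0 ⟨y₀, hy₀W, hy₀⟩ C2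
        have h23 : projDist (Submodule.span ℝ {vL}) (Submodule.span ℝ {z0}) =
            projDist (Submodule.span ℝ {z0}) (Submodule.span ℝ {vL}) := projDist_comm _ _
        linarith
      have hiter := iterC (Submodule.span ℝ {z0}) hrank_z0 hδz0 n
      rw [mg_iter_span z0 n] at hiter
      have hgz : (gl ^ n) z0 = α ^ n • vL + t • gn := by
        rw [hz0, map_add, map_smul, glpow_v, hgn]
      have hgzne : (gl ^ n) z0 ≠ 0 := by
        have h24 := (iterB (Submodule.span ℝ {z0}) hrank_z0 hδz0 n).1
        rw [mg_iter_span z0 n] at h24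
        intro h
        rw [h, Submodule.span_zero_singleton] at h24
        simp [finrank_bot] at h24
      have hlow := infDist_div_le_projDist hnv hgzne
      have hDgz : infDist ((gl ^ n) z0) (Submodule.span ℝ {vL} : Set V) =
          t * infDist gn (Submodule.span ℝ {vL} : Set V) := by
        rw [hgz, show α ^ n • vL + t • gn = t • gn + α ^ n • vL from by abel,
          infDist_span_add (Submodule.smul_mem _ _ (Submodule.mem_span_singleton_self vL)),
          infDist_span_smul, abs_of_pos htpos]
      have hgznorm : ‖(gl ^ n) z0‖ ≤ 2 * |α| ^ n := by
        rw [hgz]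
        refine le_trans (norm_add_le _ _) ?_
        have h25 : ‖α ^ n • vL‖ = |α| ^ n := by
          rw [norm_smul, Real.norm_eq_abs, hnv, mul_one, abs_pow]
        have h26 : ‖t • gn‖ = t * ‖gn‖ := by
          rw [norm_smul, Real.norm_eq_abs, abs_of_pos htpos]
        linarith
      have hgzpos : 0 < ‖(gl ^ n) z0‖ := norm_pos_iff.2 hgzne
      have hchain : infDist ((gl ^ n) z0) (Submodule.span ℝ {vL} : Set V) / ‖(gl ^ n) z0‖ ≤
          ε ^ n * (4 * (t * ‖u - p‖)) := by
        refine le_trans hlow ?_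
        refine le_trans hiter ?_
        exact mul_le_mul_of_nonneg_left dup (pow_nonneg (le_of_lt hε) n)
      have h27 : infDist ((gl ^ n) z0) (Submodule.span ℝ {vL} : Set V) ≤
          ε ^ n * (4 * (t * ‖u - p‖)) * ‖(gl ^ n) z0‖ := (div_le_iff₀ hgzpos).1 hchain
      have h28 : infDist ((gl ^ n) z0) (Submodule.span ℝ {vL} : Set V) ≤
          ε ^ n * (4 * (t * ‖u - p‖)) * (2 * |α| ^ n) := by
        refine le_trans h27 ?_
        apply mul_le_mul_of_nonneg_left hgznorm
        positivity
      have h29 : infDist gn (Submodule.span ℝ {vL} : Set V) ≤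
          8 * (ε ^ n * |α| ^ n) * ‖u - p‖ := by
        have h30 : ε ^ n * (4 * (t * ‖u - p‖)) * (2 * |α| ^ n) =
            t * (8 * (ε ^ n * |α| ^ n) * ‖u - p‖) := by ring
        rw [hDgz, h30] at h28
        exact (mul_le_mul_iff_right₀ htpos).1 h28
      rw [hDeq]
      have hA : 8 * (ε * |α|) ^ n = 8 * (ε ^ n * |α| ^ n) := by rw [mul_pow]
      rw [hA]
      have h32 : 8 * (ε ^ n * |α| ^ n) * ‖u - p‖ ≤ 8 * (ε ^ n * |α| ^ n) *
          (infDist u (Submodule.span ℝ {vL} : Set V) + η / (8 * (ε * |α|) ^ n)) := by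
        apply mul_le_mul_of_nonneg_left (le_of_lt hnu')
        positivity
      have h33 : 8 * (ε ^ n * |α| ^ n) * (η / (8 * (ε * |α|) ^ n)) = η := by
        rw [← mul_pow]
        field_simp
      have h34 : 8 * (ε ^ n * |α| ^ n) *
          (infDist u (Submodule.span ℝ {vL} : Set V) + η / (8 * (ε * |α|) ^ n)) =
          8 * (ε ^ n * |α| ^ n) * infDist u (Submodule.span ℝ {vL} : Set V) +
          8 * (ε ^ n * |α| ^ n) * (η / (8 * (ε * |α|) ^ n)) := by ring
      rw [h34, h33] at h32
      linarith
  -- Part C : the invariant hyperplane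
  have glpow_gen : ∀ (q : V), gl q = α • q → ∀ n : ℕ, (gl ^ n) q = (α ^ n) • q := by
    intro q hq n
    induction n with
    | zero => simp
    | succ n ih =>
      rw [pow_succ, Module.End.mul_apply, hq, map_smul, ih, smul_smul, pow_succ, mul_comm]
  have hclosed : IsClosed ((Submodule.span ℝ {vL} : Submodule ℝ V) : Set V) :=
    Submodule.closed_of_finiteDimensional _
  have hne : ((Submodule.span ℝ {vL} : Submodule ℝ V) : Set V).Nonempty := ⟨0, Submodule.zero_mem _⟩
  have hcontra : ∀ q : V, q ∉ Submodule.span ℝ {vL} →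
      ¬ (∀ n : ℕ, infDist ((gl ^ n) q) (Submodule.span ℝ {vL} : Set V) =
        |α| ^ n * infDist q (Submodule.span ℝ {vL} : Set V)) := by
    intro q hqn hq
    have hDpos : 0 < infDist q (Submodule.span ℝ {vL} : Set V) :=
      (hclosed.notMem_iff_infDist_pos hne).1 (by simpa using hqn)
    obtain ⟨n, hn⟩ := exists_pow_lt_of_lt_one (by norm_num : (0:ℝ) < 1/8) hεlt1
    have hk := key q n
    rw [hq n, mul_pow] at hk
    have hP : 0 < |α| ^ n * infDist q (Submodule.span ℝ {vL} : Set V) :=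
      mul_pos (pow_pos habs n) hDpos
    nlinarith [hk, hn, hP, pow_nonneg (le_of_lt hε) n]
  set l : V →ₗ[ℝ] V := gl - α • LinearMap.id with hldef
  have hlapp : ∀ q : V, l q = gl q - α • q := by
    intro q
    rw [hldef]
    simp [LinearMap.sub_apply]
  have hlv : l vL = 0 := by rw [hlapp, hαv, sub_self]
  set W' : Submodule ℝ V := LinearMap.range l with hW'def
  have hvnotin : vL ∉ W' := by
    intro hmem
    obtain ⟨q, hq⟩ := hmem
    have hgq : gl q = α • q + vL := by
      have h1 : gl q - α • q = vL := by rw [← hlapp, hq]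
      exact eq_add_of_sub_eq' h1
    have hpowq : ∀ n : ℕ, ∃ c : ℝ, (gl ^ n) q = (α ^ n) • q + c • vL := by
      intro n
      induction n with
      | zero => exact ⟨0, by simp⟩
      | succ n ih =>
        obtain ⟨c, hc⟩ := ih
        refine ⟨α ^ n + c * α, ?_⟩
        rw [pow_succ, Module.End.mul_apply, hgq, map_add, map_smul, hc, glpow_v]
        module
    rcases Classical.em (q ∈ Submodule.span ℝ {vL}) with hqin | hqout
    · obtain ⟨c, rfl⟩ := Submodule.mem_span_singleton.1 hqin
      rw [map_smul, hlv, smul_zero] at hq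
      exact hv0 hq.symm
    · refine hcontra q hqout ?_
      intro n
      obtain ⟨c, hc⟩ := hpowq n
      rw [hc, infDist_span_add (Submodule.smul_mem _ _ (Submodule.mem_span_singleton_self vL)),
        infDist_span_smul, abs_pow]
  have hker : LinearMap.ker l = Submodule.span ℝ {vL} := by
    apply le_antisymm
    · intro q hq
      by_contra hqn
      have hgq : gl q = α • q := by
        have h1 : gl q - α • q = 0 := by rw [← hlapp, LinearMap.mem_ker.1 hq]
        exact sub_eq_zero.1 h1
      refine hcontra q hqn ?_
      intro n
      rw [glpow_gen q hgq n, infDist_span_smul, abs_pow]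
    · rw [Submodule.span_le, Set.singleton_subset_iff]
      exact LinearMap.mem_ker.2 hlv
  have hrankW' : Module.finrank ℝ W' + 1 = Module.finrank ℝ V := by
    have h1 := LinearMap.finrank_range_add_finrank_ker l
    rw [hker, hrank_v] at h1
    exact h1
  have hdisj : Submodule.span ℝ {vL} ⊓ W' = ⊥ := by
    rw [eq_bot_iff]
    intro z hz
    obtain ⟨hz1, hz2⟩ := Submodule.mem_inf.1 hz
    obtain ⟨c, rfl⟩ := Submodule.mem_span_singleton.1 hz1
    rcases eq_or_ne c 0 with rfl | hc
    · simp
    · exfalso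
      apply hvnotin
      have h2 : vL = c⁻¹ • (c • vL) := by rw [smul_smul, inv_mul_cancel₀ hc, one_smul]
      rw [h2]
      exact Submodule.smul_mem _ _ hz2
  have hcompl : IsCompl (Submodule.span ℝ {vL}) W' := by
    constructor
    · rw [disjoint_iff]
      exact hdisj
    · rw [codisjoint_iff]
      apply Submodule.eq_top_of_finrank_eq
      have h1 := Submodule.finrank_sup_add_finrank_inf_eq (Submodule.span ℝ {vL}) W'
      rw [hdisj, finrank_bot, hrank_v] at h1
      omega
  have hcommute : ∀ q : V, l (gl q) = gl (l q) := by
    intro q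
    rw [hlapp, hlapp, map_sub, map_smul]
  have hinv' : ∀ w ∈ W', gl w ∈ W' := by
    intro w hw
    obtain ⟨q, rfl⟩ := hw
    exact ⟨gl q, hcommute q⟩
  have hinvpow : ∀ (n : ℕ) (w : V), w ∈ W' → (gl ^ n) w ∈ W' := by
    intro n
    induction n with
    | zero => intro w hw; simpa using hw
    | succ n ih =>
      intro w hw
      rw [pow_succ, Module.End.mul_apply]
      exact ih _ (hinv' w hw)
  set gW0 : W' →ₗ[ℝ] W' := gl.restrict hinv' with hgW0def
  set gW : ↥W' →L[ℝ] ↥W' := LinearMap.toContinuousLinearMap gW0 with hgWdef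
  have hgWcoe : ∀ w : W', ((gW w : W') : V) = gl (w : V) := by
    intro w
    rw [hgWdef, show (LinearMap.toContinuousLinearMap gW0) w = gW0 w from by
      rw [LinearMap.coe_toContinuousLinearMap'], hgW0def]
    exact LinearMap.restrict_coe_apply _ _ _
  have hgWpow : ∀ (n : ℕ) (w : W'), (((gW ^ n) w : W') : V) = (gl ^ n) (w : V) := by
    intro n
    induction n with
    | zero => intro w; simp
    | succ n ih =>
      intro w
      rw [pow_succ, ContinuousLinearMap.mul_apply, ih (gW w), hgWcoe w, pow_succ,
        Module.End.mul_apply]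
  -- norm comparison on W'
  obtain ⟨C, hCpos, hC⟩ : ∃ C : ℝ, 0 < C ∧ ∀ w : V, w ∈ W' →
      ‖w‖ ≤ C * infDist w (Submodule.span ℝ {vL} : Set V) := by
    set π0 : V →ₗ[ℝ] W' := Submodule.projectionOnto W' (Submodule.span ℝ {vL}) hcompl.symm
      with hπ0
    set πL : V →L[ℝ] ↥W' := LinearMap.toContinuousLinearMap π0 with hπL
    refine ⟨‖πL‖ + 1, by positivity, ?_⟩
    intro w hw
    have hbound : ∀ p ∈ (Submodule.span ℝ {vL} : Set V), ‖w‖ / (‖πL‖ + 1) ≤ dist w p := by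
      intro p hp
      have h1 : π0 (w - p) = ⟨w, hw⟩ := by
        rw [map_sub, hπ0]
        rw [show π0 w = Submodule.projectionOnto W' (Submodule.span ℝ {vL}) hcompl.symm w
          from by rw [hπ0]] at *
        have h2 := Submodule.linearProjOfIsCompl_apply_left hcompl.symm (⟨w, hw⟩ : W')
        have h3 := Submodule.linearProjOfIsCompl_apply_right hcompl.symm (⟨p, hp⟩ : Submodule.span ℝ {vL})
        simp only [Submodule.coe_mk] at h2 h3
        rw [h2, h3, sub_zero]
      have h4 : ‖w‖ ≤ (‖πL‖ + 1) * ‖w - p‖ := by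
        have h5 : ‖πL (w - p)‖ ≤ ‖πL‖ * ‖w - p‖ := πL.le_opNorm _
        have h6 : πL (w - p) = π0 (w - p) := by
          rw [hπL, LinearMap.coe_toContinuousLinearMap']
        have h7 : ‖π0 (w - p)‖ = ‖w‖ := by
          rw [h1, Submodule.coe_norm]
        rw [h6, h7] at h5
        nlinarith [norm_nonneg (w - p)]
      rw [dist_eq_norm, div_le_iff₀ (by positivity : (0:ℝ) < ‖πL‖ + 1)]
      linarith [h4]
    have h2 : ‖w‖ / (‖πL‖ + 1) ≤ infDist w (Submodule.span ℝ {vL} : Set V) := by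
      by_contra hcon
      push_neg at hcon
      obtain ⟨p, hp, hdp⟩ := (infDist_lt_iff hne).1 hcon
      exact absurd hdp (not_lt.2 (hbound p hp))
    rw [div_le_iff₀ (by positivity : (0:ℝ) < ‖πL‖ + 1)] at h2
    calc ‖w‖ ≤ infDist w (Submodule.span ℝ {vL} : Set V) * (‖πL‖ + 1) := h2
      _ = (‖πL‖ + 1) * infDist w (Submodule.span ℝ {vL} : Set V) := by ring
  have hop : ∀ n : ℕ, ‖gW ^ n‖ ≤ (8 * C) * (ε * |α|) ^ n := by
    intro n
    apply ContinuousLinearMap.opNorm_le_bound _ (by positivity)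
    intro w
    have h1 : ‖(gW ^ n) w‖ = ‖(((gW ^ n) w : W') : V)‖ := Submodule.coe_norm _
    rw [h1, hgWpow n w]
    have h2 : ‖(gl ^ n) (w : V)‖ ≤ C * infDist ((gl ^ n) (w : V)) (Submodule.span ℝ {vL} : Set V) :=
      hC _ (hinvpow n (w : V) w.2)
    have h3 := key (w : V) n
    have h4 : infDist ((w : V)) (Submodule.span ℝ {vL} : Set V) ≤ ‖(w : V)‖ := by
      have h5 := infDist_le_dist_of_mem (x := (w : V)) (Submodule.zero_mem (Submodule.span ℝ {vL}))
      rwa [dist_zero_right] at h5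
    have h6 : ‖w‖ = ‖(w : V)‖ := Submodule.coe_norm _
    rw [h6]
    calc ‖(gl ^ n) (w : V)‖ ≤ C * infDist ((gl ^ n) (w : V)) (Submodule.span ℝ {vL} : Set V) := h2
      _ ≤ C * (8 * (ε * |α|) ^ n * infDist ((w : V)) (Submodule.span ℝ {vL} : Set V)) :=
          mul_le_mul_of_nonneg_left h3 (le_of_lt hCpos)
      _ ≤ C * (8 * (ε * |α|) ^ n * ‖(w : V)‖) := by
          apply mul_le_mul_of_nonneg_left _ (le_of_lt hCpos)
          apply mul_le_mul_of_nonneg_left h4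
          positivity
      _ = (8 * C) * (ε * |α|) ^ n * ‖(w : V)‖ := by ring
  have hspec : specRad gW < |α| := by
    have hrpos : 0 < ε * |α| := mul_pos hε habs
    have hrlt : ε * |α| < |α| := by nlinarith
    have hMpos : (0:ℝ) < 8 * C := by positivity
    have hub : ∀ᶠ n : ℕ in atTop, ‖gW ^ n‖ ^ ((1:ℝ)/n) ≤ (8*C) ^ ((1:ℝ)/n) * (ε * |α|) := by
      filter_upwards [Filter.eventually_ge_atTop 1] with n hn
      have h1 : ‖gW ^ n‖ ^ ((1:ℝ)/n) ≤ ((8*C) * (ε * |α|) ^ n) ^ ((1:ℝ)/n) :=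
        Real.rpow_le_rpow (ContinuousLinearMap.opNorm_nonneg _) (hop n) (by positivity)
      refine le_trans h1 ?_
      rw [Real.mul_rpow (le_of_lt hMpos) (by positivity), ← Real.rpow_natCast (ε * |α|) n,
        ← Real.rpow_mul (le_of_lt hrpos)]
      have hnn : (n:ℝ) ≠ 0 := Nat.cast_ne_zero.2 (by omega)
      have h2 : (n:ℝ) * ((1:ℝ)/n) = 1 := by field_simp
      rw [h2, Real.rpow_one]
    have hlimM : Filter.Tendsto (fun n : ℕ => (8*C) ^ ((1:ℝ)/n) * (ε * |α|)) atTop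
        (𝓝 (ε * |α|)) := by
      have h1 : Filter.Tendsto (fun n : ℕ => (1:ℝ)/n) atTop (𝓝 0) :=
        tendsto_one_div_atTop_nhds_zero_nat
      have h2 : ContinuousAt (fun x : ℝ => (8*C) ^ x) 0 :=
        Real.continuousAt_const_rpow (ne_of_gt hMpos)
      have h3 : Filter.Tendsto (fun n : ℕ => (8*C) ^ ((1:ℝ)/n)) atTop (𝓝 ((8*C) ^ (0:ℝ))) :=
        h2.tendsto.comp h1
      rw [Real.rpow_zero] at h3
      simpa using h3.mul_const (ε * |α|)
    have hbdd : Filter.IsBoundedUnder (· ≤ ·) atTop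
        (fun n : ℕ => (8*C) ^ ((1:ℝ)/n) * (ε * |α|)) := hlimM.isBoundedUnder_le
    have hcob : Filter.IsCoboundedUnder (· ≤ ·) atTop
        (fun n : ℕ => ‖gW ^ n‖ ^ ((1:ℝ)/n)) := by
      apply Filter.isCoboundedUnder_le_of_eventually_le atTop (x := 0)
      exact Filter.Eventually.of_forall fun n => by positivity
    have hlimsup : specRad gW ≤ ε * |α| := by
      have h5 := Filter.limsup_le_limsup hub hcob hbdd
      rwa [hlimM.limsup_eq] at h5
    linarith
  -- conclusion 3
  have hW'iter : ∀ (x : Submodule ℝ V), x ≤ W' → ∀ n : ℕ, mg^[n] x ≤ W' := by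
    intro x hx n
    induction n with
    | zero => exact hx
    | succ n ih =>
      rw [Function.iterate_succ_apply']
      intro w hw
      obtain ⟨q, hq, rfl⟩ := Submodule.mem_map.1 hw
      exact hinv' q (ih hq)
  have conc3 : ∀ x : Submodule ℝ V, Module.finrank ℝ x = 1 → x ≤ W' → projDelta x W < ε := by
    intro x hx hxle
    by_contra hcon
    push_neg at hcon
    have hxv2 : projDist x (Submodule.span ℝ {vL}) ≤ 2 := projDist_le_two hx hrank_v
    have hbn : ∀ n : ℕ, ∃ b : V, b ∈ W' ∧ ‖vL - b‖ ≤ 2 * ε ^ n := by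
      intro n
      have h1 := iterC x hx hcon n
      have h2 := (iterB x hx hcon n).1
      obtain ⟨b₀, hb₀, hbspan⟩ := line_exists_unit h2
      obtain ⟨b', hb', hbspan', hmatch⟩ := projDist_match hnv hb₀
      refine ⟨b', ?_, ?_⟩
      · have h3 : b' ∈ Submodule.span ℝ {b'} := Submodule.mem_span_singleton_self b'
        rw [hbspan', ← hbspan] at h3
        exact hW'iter x hxle n h3
      · have h4 : projDist (Submodule.span ℝ {vL}) (mg^[n] x) = ‖vL - b'‖ := by
          rw [hbspan]
          exact hmatch
        calc ‖vL - b'‖ = projDist (Submodule.span ℝ {vL}) (mg^[n] x) := h4.symm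
          _ = projDist (mg^[n] x) (Submodule.span ℝ {vL}) := projDist_comm _ _
          _ ≤ ε ^ n * projDist x (Submodule.span ℝ {vL}) := h1
          _ ≤ ε ^ n * 2 := mul_le_mul_of_nonneg_left hxv2 (pow_nonneg (le_of_lt hε) n)
          _ = 2 * ε ^ n := by ring
    choose bseq hbmem hbdist using hbn
    have htend : Filter.Tendsto bseq atTop (𝓝 vL) := by
      rw [tendsto_iff_norm_sub_tendsto_zero]
      apply squeeze_zero (fun n => norm_nonneg _) (g := fun n => 2 * ε ^ n)
      · intro n
        rw [norm_sub_rev]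
        exact hbdist n
      · have := (tendsto_pow_atTop_nhds_zero_of_lt_one (le_of_lt hε) hεlt1).const_mul (2:ℝ)
        simpa using this
    have hclW' : IsClosed ((W' : Submodule ℝ V) : Set V) := Submodule.closed_of_finiteDimensional _
    exact hvnotin (hclW'.mem_of_tendsto htend (Filter.Eventually.of_forall fun n => hbmem n))
  refine ⟨α, vL, W', ⟨hv0, hαv, hcompl, gW, ?_, hspec⟩, C1, conc3⟩
  intro w
  exact (hgWcoe w).symm
end
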